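/- Let T be a finite semigroup and suppose φ : T → N is a relational morphism to a finite semigroup N in \bar{G}_π such that for every n ∈ N, the preimage nφ^{-1} is contained in some element of CP_π(T). Then every \bar{G}_π-pointlike subset of T is contained in an element of CP_π(T); combined with Proposition 'cyclic amalgamation', PL_{\bar{G}_π}(T) = { X ⊆ T : X ⊆ Y for some Y ∈ CP_π(T) }. -/

import Mathlib

open Pointwise

/-- Multiplication of an element of a semigroup `M` by an element of `M¹ = M` with an
adjoined identity (modelled as `Option M`, `none` being the identity `I`). -/
def hmul {M : Type*} [Mul M] (h : M) : Option M → M := fun s => s.elim h (fun u => h * u)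

/-- Multiplication in `M¹` (modelled as `Option M`). -/
def omul {M : Type*} [Mul M] : Option M → Option M → Option M
  | none, t => t
  | some a, none => some a
  | some a, some b => some (a * b)

/-- `mpow a n = aⁿ` for `n ≥ 1` (with the junk value `mpow a 0 = a`). -/
def mpow {M : Type*} [Mul M] (a : M) : ℕ → M
  | 0 => a
  | 1 => a
  | n+2 => mpow a (n+1) * a

/-- Green's preorder `a ≤_L b` iff `a ∈ M¹ b`. -/
def leL {M : Type*} [Mul M] (a b : M) : Prop := a = b ∨ ∃ u, a = u * b
/-- Green's preorder `a ≤_R b` iff `a ∈ b M¹`. -/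
def leR {M : Type*} [Mul M] (a b : M) : Prop := a = b ∨ ∃ u, a = b * u
/-- Green's `L`-equivalence. -/
def eqL {M : Type*} [Mul M] (a b : M) : Prop := leL a b ∧ leL b a
/-- Green's `R`-equivalence. -/
def eqR {M : Type*} [Mul M] (a b : M) : Prop := leR a b ∧ leR b a
/-- Green's `H`-equivalence. -/
def eqH {M : Type*} [Mul M] (a b : M) : Prop := eqL a b ∧ eqR a b
/-- `a <_H b` : `a ≤_L b`, `a ≤_R b`, but `a` is not `H`-equivalent to `b`. -/
def ltH {M : Type*} [Mul M] (a b : M) : Prop := leL a b ∧ leR a b ∧ ¬ eqH a b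

/-- The `H`-class of `a`, as a type. -/
def HclsT {M : Type*} [Mul M] (a : M) := {x : M // eqH x a}

/-- The (right) Schützenberger group of the `H`-class of `a`: the set of transformations of the
`H`-class of `a` induced by right multiplication by elements of the right stabilizer in `M¹`. -/
def gammaR {M : Type*} [Mul M] (a : M) : Set (HclsT a → HclsT a) :=
  {f | ∃ s : Option M, (∀ h : HclsT a, eqH (hmul h.1 s) a) ∧
        ∀ h : HclsT a, (f h).1 = hmul h.1 s}

/-- An element is `π'`-free if the Schützenberger group of its (`J`-class, equivalently its)
`H`-class is a `π`-group: every prime dividing its order lies in `π`. -/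
def piFree {M : Type*} [Mul M] (π : Set ℕ) (a : M) : Prop :=
  ∀ p : ℕ, p.Prime → p ∣ (gammaR a).ncard → p ∈ π

/-- A subset `G` of a semigroup is a subgroup: a nonempty subsemigroup with an identity
and inverses. -/
def IsSubgroupSet {M : Type*} [Mul M] (G : Set M) : Prop :=
  G.Nonempty ∧ (∀ a ∈ G, ∀ b ∈ G, a * b ∈ G) ∧
    ∃ e ∈ G, (∀ g ∈ G, e * g = g ∧ g * e = g) ∧ ∀ g ∈ G, ∃ h ∈ G, g * h = e ∧ h * g = e

/-- `N` lies in the pseudovariety `Ḡ_π`: every subgroup of `N` is a `π`-group. -/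
def InGbarPi (π : Set ℕ) (N : Type*) [Mul N] : Prop :=
  ∀ G : Set N, IsSubgroupSet G → ∀ p : ℕ, p.Prime → p ∣ G.ncard → p ∈ π

/-- A relational morphism `φ : T → N`: a fully defined multiplicative relation. -/
def IsRelMorphism {T N : Type*} [Mul T] [Mul N] (φ : T → N → Prop) : Prop :=
  (∀ t, ∃ n, φ t n) ∧ ∀ t t' n n', φ t n → φ t' n' → φ (t * t') (n * n')

/-- `Z ⊆ T` is `Ḡ_π`-pointlike: for every relational morphism `φ : T → N` with `N`
a finite semigroup in `Ḡ_π`, `Z ⊆ nφ⁻¹` for some `n ∈ N`. -/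
def Pointlike (π : Set ℕ) {T : Type} [Semigroup T] [Fintype T] (Z : Set T) : Prop :=
  ∀ (N : Type) [Semigroup N] [Fintype N], InGbarPi π N →
    ∀ φ : T → N → Prop, IsRelMorphism φ → ∃ n : N, ∀ t ∈ Z, φ t n

/-- Membership in `CP_π(T)`: the smallest subsemigroup of `P(T)` containing the singletons and
closed under `Z ↦ Z^{ω+*} = ⋃_{n ≥ 1} Zⁿ` whenever `Z` generates a cyclic `π'`-group
(i.e. `Z` is a group element of order `k` divisible only by primes outside `π`). -/
inductive CPmem (π : Set ℕ) {T : Type} [Semigroup T] : Set T → Prop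
  | single (t : T) : CPmem π {t}
  | mul {X Y : Set T} : CPmem π X → CPmem π Y → CPmem π (X * Y)
  | omega {Z : Set T} (k : ℕ) (hk : 0 < k) (hcyc : mpow Z (k+1) = Z)
      (hπ : ∀ p : ℕ, p.Prime → p ∣ k → p ∉ π) :
      CPmem π Z → CPmem π (⋃ n, mpow Z (n+1))

/-- The semigroup `CP_π(T)`, as a subsemigroup of `P(T)`. -/
def CPT (π : Set ℕ) (T : Type) [Semigroup T] : Type := {X : Set T // CPmem π X}

noncomputable instance {π : Set ℕ} {T : Type} [Semigroup T] : Mul (CPT π T) :=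
  ⟨fun a b => ⟨a.1 * b.1, CPmem.mul a.2 b.2⟩⟩

noncomputable instance {π : Set ℕ} {T : Type} [Semigroup T] : Semigroup (CPT π T) :=
  { (inferInstance : Mul (CPT π T)) with
    mul_assoc := fun a b c => Subtype.ext (mul_assoc a.1 b.1 c.1) }

/-- A preblowup operator on `S = CP_π(T)`: `B` fixes `π'`-free elements, strictly `H`-decreases
non-`π'`-free elements, blows elements up (`s ⊆ B(s)` as subsets of `T`), and is given by right
multiplication `B(s) = s·m_s` by multipliers `m_s ∈ S¹` constant on `L`-classes. -/
def IsPreblowup (π : Set ℕ) (T : Type) [Semigroup T]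
    (B : CPT π T → CPT π T) (m : CPT π T → Option (CPT π T)) : Prop :=
  (∀ s, piFree π s → B s = s) ∧
  (∀ s, ¬ piFree π s → ltH (B s) s) ∧
  (∀ s, s.1 ⊆ (B s).1) ∧
  (∀ s, B s = hmul s (m s)) ∧
  (∀ s s', eqL s s' → m s = m s')

-- auxiliary development, to be inserted before stmt_17
lemma mpow_two' {M : Type*} [Mul M] (a : M) (n : ℕ) : mpow a (n+2) = mpow a (n+1) * a := rfl

lemma mpow_add' {M : Type*} [Semigroup M] (a : M) (m n : ℕ) :
    mpow a (m+1) * mpow a (n+1) = mpow a (m+n+2) := by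
  induction n with
  | zero => rfl
  | succ n ih =>
    rw [mpow_two', ← mul_assoc, ih]
    rfl

/-- `gpw s n = s^(n+1)`. -/
def gpw {M : Type*} [Mul M] (s : M) (n : ℕ) : M := mpow s (n+1)

lemma gpw_add {M : Type*} [Semigroup M] (s : M) (a b : ℕ) :
    gpw s a * gpw s b = gpw s (a + b + 1) := mpow_add' s a b

lemma gpw_shift {M : Type*} [Semigroup M] (s : M) {i c : ℕ} (h : gpw s (i + c) = gpw s i) :
    ∀ n, i ≤ n → gpw s (n + c) = gpw s n := by
  intro n hn
  obtain ⟨d, rfl⟩ := Nat.exists_eq_add_of_le hn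
  cases d with
  | zero => simpa using h
  | succ d =>
    have h2 : i + (d+1) + c = i + c + d + 1 := by omega
    have h3 : i + (d+1) = i + d + 1 := by omega
    rw [h2, ← gpw_add, h, gpw_add, h3]
/-- Key lemma: in a finite semigroup all of whose subgroups are `π`-groups, for any `s` and
any `k ≥ 1` whose prime factors all lie outside `π`, there is a single element `e` absorbing
all the powers `s^(j + m k + 1)` for suitable `m`. -/
theorem key_lemma {S : Type} [Semigroup S] [Fintype S] (π : Set ℕ) (hS : InGbarPi π S) (s : S)
    (k : ℕ) (hk : 0 < k) (hπk : ∀ p : ℕ, p.Prime → p ∣ k → p ∉ π) :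
    ∃ e : S, ∀ j : ℕ, ∃ m : ℕ, gpw s (j + m * k) = e := by
  classical
  -- find a pre-period and period
  obtain ⟨a, b, hab, heq⟩ := Finite.exists_ne_map_eq_of_infinite (gpw s)
  obtain ⟨i, c, hc, hic⟩ : ∃ i c, 0 < c ∧ gpw s (i + c) = gpw s i := by
    rcases hab.lt_or_gt with h | h
    · exact ⟨a, b - a, by omega, by rw [show a + (b-a) = b by omega]; exact heq.symm⟩
    · exact ⟨b, a - b, by omega, by rw [show b + (a-b) = a by omega]; exact heq⟩
  have hP : ∃ d, 0 < d ∧ gpw s (i + d) = gpw s i := ⟨c, hc, hic⟩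
  set p := Nat.find hP with hpdef
  obtain ⟨hppos, hpper⟩ : 0 < p ∧ gpw s (i + p) = gpw s i := Nat.find_spec hP
  have hmin : ∀ d, d < p → ¬ (0 < d ∧ gpw s (i + d) = gpw s i) := fun d hd => Nat.find_min hP hd
  have hshift := gpw_shift s hpper
  -- multiples of the period
  have hmulp : ∀ m n, i ≤ n → gpw s (n + m * p) = gpw s n := by
    intro m
    induction m with
    | zero => intro n hn; simp
    | succ m ih =>
      intro n hn
      rw [Nat.succ_mul, ← Nat.add_assoc, hshift _ (by omega), ih n hn]
  -- congruence mod p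
  have hcong : ∀ a b, i ≤ a → i ≤ b → a ≡ b [MOD p] → gpw s a = gpw s b := by
    have key2 : ∀ a b, i ≤ a → a ≤ b → a ≡ b [MOD p] → gpw s b = gpw s a := by
      intro a b ha hab hm
      obtain ⟨t, ht⟩ := (Nat.modEq_iff_dvd' hab).mp hm
      have hb : b = a + t * p := by rw [mul_comm, ← ht]; omega
      rw [hb]; exact hmulp t a ha
    intro a b ha hb hm
    rcases le_total a b with h | h
    · exact (key2 a b ha h hm).symm
    · exact key2 b a hb h hm.symm
  -- the idempotent-position exponent E
  set q := (i+1)*p with hq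
  have hq1 : i + 1 ≤ q := Nat.le_mul_of_pos_right (i+1) hppos
  set E := q - 1 with hE
  have hEi : i ≤ E := by omega
  have hE1 : E + 1 = q := by omega
  -- the subgroup
  set G : Set S := {x : S | ∃ n, i ≤ n ∧ gpw s n = x} with hGdef
  have hG : IsSubgroupSet G := by
    refine ⟨⟨gpw s i, i, le_refl i, rfl⟩, ?_, ?_⟩
    · rintro x ⟨na, hna, rfl⟩ y ⟨nb, hnb, rfl⟩
      exact ⟨na + nb + 1, by omega, (gpw_add s na nb).symm⟩
    · refine ⟨gpw s E, ⟨E, hEi, rfl⟩, ?_, ?_⟩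
      · rintro g ⟨n, hn, rfl⟩
        constructor
        · rw [gpw_add, show E + n + 1 = n + (i+1) * p by omega]
          exact hmulp (i+1) n hn
        · rw [gpw_add, show n + E + 1 = n + (i+1) * p by omega]
          exact hmulp (i+1) n hn
      · rintro g ⟨n, hn, rfl⟩
        set q2 := (n+1)*p with hq2
        have hq21 : n + 1 ≤ q2 := Nat.le_mul_of_pos_right (n+1) hppos
        refine ⟨gpw s (E + q2 - (n+1)), ⟨E + q2 - (n+1), by omega, rfl⟩, ?_, ?_⟩
        · rw [gpw_add, show n + (E + q2 - (n+1)) + 1 = E + (n+1) * p by omega]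
          exact hmulp (n+1) E hEi
        · rw [gpw_add, show (E + q2 - (n+1)) + n + 1 = E + (n+1) * p by omega]
          exact hmulp (n+1) E hEi
  -- G is the image of [i, i+p), injectively
  have himg : G = gpw s '' Set.Ico i (i + p) := by
    ext x
    constructor
    · rintro ⟨n, hn, rfl⟩
      refine ⟨i + (n - i) % p, ⟨by omega, by have := Nat.mod_lt (n - i) hppos; omega⟩, ?_⟩
      have h1 : (n - i) % p + p * ((n - i) / p) = n - i := Nat.mod_add_div _ _
      have e1 : i + (n - i) % p + (n - i) / p * p = n := by
        rw [mul_comm]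
        generalize hq3 : p * ((n - i) / p) = q3 at h1 ⊢
        omega
      calc gpw s (i + (n - i) % p)
          = gpw s (i + (n - i) % p + (n - i) / p * p) :=
            (hmulp ((n - i)/p) (i + (n - i) % p) (by omega)).symm
        _ = gpw s n := by rw [e1]
    · rintro ⟨n, hn, rfl⟩
      exact ⟨n, hn.1, rfl⟩
  have hinj : Set.InjOn (gpw s) (Set.Ico i (i + p)) := by
    have main : ∀ a b, a ∈ Set.Ico i (i+p) → b ∈ Set.Ico i (i+p) → a < b → gpw s a = gpw s b → False := by
      intro a b ha hb hlt he
      set d := b - a with hd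
      have hd0 : 0 < d := by omega
      have hdp : d < p := by simp [Set.mem_Ico] at ha hb; omega
      have hsh2 : ∀ n, a ≤ n → gpw s (n + d) = gpw s n :=
        gpw_shift s (by rw [show a + d = b by omega]; exact he.symm)
      have ha' : i ≤ a := ha.1
      set q4 := (a+1)*p with hq4
      have hq41 : a + 1 ≤ q4 := Nat.le_mul_of_pos_right (a+1) hppos
      have step1 : gpw s i = gpw s (i + q4) := (hmulp (a+1) i (le_refl i)).symm
      have step2 : gpw s (i + q4) = gpw s (i + q4 + d) := (hsh2 (i + q4) (by omega)).symm
      have step3 : gpw s (i + q4 + d) = gpw s (i + d) := by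
        rw [show i + q4 + d = (i + d) + (a+1)*p by omega]
        exact hmulp (a+1) (i + d) (by omega)
      exact hmin d hdp ⟨hd0, (step1.trans (step2.trans step3)).symm⟩
    intro a ha b hb he
    rcases Nat.lt_trichotomy a b with h | h | h
    · exact absurd he (fun he => main a b ha hb h he)
    · exact h
    · exact absurd he.symm (fun he => main b a hb ha h he)
  have hncard : G.ncard = p := by
    rw [himg, Set.ncard_image_of_injOn hinj, ← Nat.card_coe_set_eq,
      Nat.card_eq_fintype_card, ← Set.toFinset_card, Set.toFinset_Ico, Nat.card_Ico]
    omega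
  -- coprimality
  have hcop : Nat.Coprime k p := by
    by_contra hne
    obtain ⟨r, hr, hrd⟩ := Nat.exists_prime_and_dvd hne
    exact hπk r hr (hrd.trans (Nat.gcd_dvd_left _ _))
      (hS G hG r hr (by rw [hncard]; exact hrd.trans (Nat.gcd_dvd_right _ _)))
  -- conclusion
  haveI : NeZero p := ⟨by omega⟩
  refine ⟨gpw s E, fun j => ?_⟩
  set m0 := (((E : ZMod p) - (j : ZMod p)) * (k : ZMod p)⁻¹).val with hm0
  refine ⟨m0 + (i+1)*p, ?_⟩
  apply hcong
  · have h2 : q ≤ q * k := Nat.le_mul_of_pos_right q hk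
    have h3 : (i+1)*p*k ≤ (m0 + (i+1)*p)*k := Nat.mul_le_mul_right k (by omega)
    have h4 : q * k = (i+1)*p*k := by rw [hq]
    omega
  · exact hEi
  · rw [← ZMod.natCast_eq_natCast_iff]
    have hu : IsUnit ((k : ℕ) : ZMod p) := (ZMod.isUnit_iff_coprime k p).mpr hcop
    have hval : ((m0 : ℕ) : ZMod p) = ((E : ZMod p) - (j : ZMod p)) * (k : ZMod p)⁻¹ := by
      rw [hm0]; exact ZMod.natCast_rightInverse _
    push_cast
    rw [ZMod.natCast_self, mul_zero, add_zero, hval, mul_assoc,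
      ZMod.inv_mul_of_unit _ hu, mul_one]
    ring
lemma zpw_period {T : Type} [Semigroup T] {Z : Set T} {k : ℕ}
    (hcyc : mpow Z (k+1) = Z) : ∀ n m : ℕ, gpw Z (n + m * k) = gpw Z n := by
  have h0 : gpw Z (0 + k) = gpw Z 0 := by
    rw [Nat.zero_add]
    exact hcyc
  have h1 : ∀ n, gpw Z (n + k) = gpw Z n := fun n => gpw_shift Z h0 n (Nat.zero_le n)
  intro n m
  induction m with
  | zero => simp
  | succ m ih =>
    rw [Nat.succ_mul, ← Nat.add_assoc, h1, ih]

lemma mem_mpow_rel {T N' : Type} [Semigroup T] [Semigroup N'] {ψ : T → N' → Prop}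
    (hψm : ∀ t t' n n', ψ t n → ψ t' n' → ψ (t * t') (n * n'))
    {Z : Set T} {s : N'} (h : ∀ t ∈ Z, ψ t s) :
    ∀ j t, t ∈ mpow Z (j+1) → ψ t (mpow s (j+1)) := by
  intro j
  induction j with
  | zero => exact h
  | succ j ih =>
    intro t ht
    rw [mpow_two'] at ht
    obtain ⟨a, ha, b, hb, rfl⟩ := Set.mem_mul.mp ht
    exact hψm _ _ _ _ (ih a ha) (h b hb)

theorem cp_pointlike (π : Set ℕ) {T : Type} [Semigroup T] [Fintype T] {Y : Set T}
    (h : CPmem π Y) : Pointlike π Y := by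
  induction h with
  | single t =>
    intro N' _ _ hN' ψ hψ
    obtain ⟨n, hn⟩ := hψ.1 t
    refine ⟨n, fun u hu => ?_⟩
    rw [Set.mem_singleton_iff] at hu
    subst hu; exact hn
  | mul hX hY ihX ihY =>
    intro N' _ _ hN' ψ hψ
    obtain ⟨nX, hnX⟩ := ihX N' hN' ψ hψ
    obtain ⟨nY, hnY⟩ := ihY N' hN' ψ hψ
    refine ⟨nX * nY, fun t ht => ?_⟩
    obtain ⟨a, ha, b, hb, rfl⟩ := Set.mem_mul.mp ht
    exact hψ.2 _ _ _ _ (hnX a ha) (hnY b hb)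
  | @omega Z k hk hcyc hπk hZ ih =>
    intro N' _ _ hN' ψ hψ
    obtain ⟨s, hs⟩ := ih N' hN' ψ hψ
    obtain ⟨e, he⟩ := key_lemma π hN' s k hk hπk
    refine ⟨e, fun t ht => ?_⟩
    obtain ⟨j, hj⟩ := Set.mem_iUnion.mp ht
    obtain ⟨m, hm⟩ := he j
    have ht' : t ∈ mpow Z (j + m * k + 1) := by
      have := zpw_period hcyc j m
      unfold gpw at this
      rw [this]
      exact hj
    have := mem_mpow_rel hψ.2 hs (j + m * k) t ht'
    have hm' : mpow s (j + m * k + 1) = e := hm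
    rwa [hm'] at this
/-- If there is a relational morphism `φ : T → N` to a finite semigroup `N ∈ Ḡ_π` such that
every preimage `nφ⁻¹` is contained in some element of `CP_π(T)`, then every `Ḡ_π`-pointlike
subset of `T` is contained in an element of `CP_π(T)`; combined with cyclic amalgamation,
`PL_{Ḡ_π}(T) = { X ⊆ T : X ⊆ Y for some Y ∈ CP_π(T) }`. -/
theorem stmt_17 (π : Set ℕ) (T N : Type) [Semigroup T] [Fintype T] [Semigroup N] [Fintype N]
    (hN : InGbarPi π N) (φ : T → N → Prop) (hφ : IsRelMorphism φ)
    (hcover : ∀ n : N, ∃ Y : Set T, CPmem π Y ∧ {t : T | φ t n} ⊆ Y) :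
    ∀ X : Set T, Pointlike π X ↔ ∃ Y : Set T, CPmem π Y ∧ X ⊆ Y := by
  intro X
  constructor
  · intro hX
    obtain ⟨n, hn⟩ := hX N hN φ hφ
    obtain ⟨Y, hY, hsub⟩ := hcover n
    exact ⟨Y, hY, fun t ht => hsub (hn t ht)⟩
  · rintro ⟨Y, hY, hsub⟩
    intro N' _ _ hN' ψ hψ
    obtain ⟨n, hn⟩ := cp_pointlike π hY N' hN' ψ hψ
    exact ⟨n, fun t ht => hn t (hsub ht)⟩
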